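/- For any commutative ring A, the map B(A) → A^× × A_{A^×} sending the matrix [[a,b],[0,a⁻¹]] to the pair (a, class of ab) is a surjective group homomorphism whose kernel is the commutator subgroup of B(A); hence B(A)^ab ≅ A^× ⊕ A_{A^×}. -/

import Mathlib

open Matrix

variable (A : Type*) [CommRing A]

/-- `B(A)`: the subgroup of `SL₂(A)` of matrices `[[a,b],[0,a⁻¹]]`, i.e. with vanishing
lower-left entry. -/
def BA : Subgroup (Matrix.SpecialLinearGroup (Fin 2) A) where
  carrier := {g | (g : Matrix (Fin 2) (Fin 2) A) 1 0 = 0}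
  one_mem' := by simp
  mul_mem' := by
    intro g h hg hh
    simp only [Set.mem_setOf_eq] at *
    show ((g : Matrix (Fin 2) (Fin 2) A) * (h : Matrix (Fin 2) (Fin 2) A)) 1 0 = 0
    rw [Matrix.mul_apply, Fin.sum_univ_two]
    simp [hg, hh]
  inv_mem' := by
    intro g hg
    simp only [Set.mem_setOf_eq] at *
    show (((g⁻¹ : Matrix.SpecialLinearGroup (Fin 2) A)) : Matrix (Fin 2) (Fin 2) A) 1 0 = 0
    rw [Matrix.SpecialLinearGroup.coe_inv, Matrix.adjugate_fin_two]
    simp [hg]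

/-- `T(A)`: the subgroup of `SL₂(A)` of diagonal matrices `diag(a, a⁻¹)`. -/
def TA : Subgroup (Matrix.SpecialLinearGroup (Fin 2) A) where
  carrier := {g | (g : Matrix (Fin 2) (Fin 2) A) 1 0 = 0 ∧
    (g : Matrix (Fin 2) (Fin 2) A) 0 1 = 0}
  one_mem' := by constructor <;> simp
  mul_mem' := by
    intro g h hg hh
    obtain ⟨hg1, hg2⟩ := hg
    obtain ⟨hh1, hh2⟩ := hh
    constructor <;>
    · show ((g : Matrix (Fin 2) (Fin 2) A) * (h : Matrix (Fin 2) (Fin 2) A)) _ _ = 0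
      rw [Matrix.mul_apply, Fin.sum_univ_two]
      simp [hg1, hg2, hh1, hh2]
  inv_mem' := by
    intro g hg
    obtain ⟨hg1, hg2⟩ := hg
    constructor <;>
    · show (((g⁻¹ : Matrix.SpecialLinearGroup (Fin 2) A)) : Matrix (Fin 2) (Fin 2) A) _ _ = 0
      rw [Matrix.SpecialLinearGroup.coe_inv, Matrix.adjugate_fin_two]
      simp [hg1, hg2]

lemma TA_le_BA : TA A ≤ BA A := fun _ hg => hg.1

/-- The additive subgroup of `A` generated by the elements `x(a²−1)`, `x ∈ A`, `a ∈ A^×`. -/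
def Asub : AddSubgroup A :=
  AddSubgroup.closure {z : A | ∃ (x : A) (a : Aˣ), z = x * ((a : A) ^ 2 - 1)}

namespace BAab

variable {A}

/-- entry extraction -/
def mat (g : ↥(BA A)) : Matrix (Fin 2) (Fin 2) A :=
  ((g : Matrix.SpecialLinearGroup (Fin 2) A) : Matrix (Fin 2) (Fin 2) A)

lemma lower (g : ↥(BA A)) : mat g 1 0 = 0 := g.2

lemma det_eq (g : ↥(BA A)) : mat g 0 0 * mat g 1 1 = 1 := by
  have h := (g : Matrix.SpecialLinearGroup (Fin 2) A).2
  rw [Matrix.det_fin_two] at h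
  rw [show (g : Matrix.SpecialLinearGroup (Fin 2) A).1 = mat g from rfl] at h
  rw [lower g] at h
  simpa using h

lemma mat_mul (g h : ↥(BA A)) : mat (g * h) = mat g * mat h := rfl

lemma mat_one : mat (1 : ↥(BA A)) = 1 := rfl

lemma mul_00 (g h : ↥(BA A)) : mat (g * h) 0 0 = mat g 0 0 * mat h 0 0 := by
  rw [mat_mul, Matrix.mul_apply, Fin.sum_univ_two, lower h, mul_zero, add_zero]

lemma mul_01 (g h : ↥(BA A)) :
    mat (g * h) 0 1 = mat g 0 0 * mat h 0 1 + mat g 0 1 * mat h 1 1 := by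
  rw [mat_mul, Matrix.mul_apply, Fin.sum_univ_two]

/-- the unit given by the (0,0) entry -/
def au (g : ↥(BA A)) : Aˣ :=
  ⟨mat g 0 0, mat g 1 1, det_eq g, by rw [mul_comm]; exact det_eq g⟩

def f1 : ↥(BA A) →* Aˣ :=
  MonoidHom.mk' au (fun g h => by
    ext
    show mat (g * h) 0 0 = mat g 0 0 * mat h 0 0
    exact mul_00 g h)

def f2 : ↥(BA A) →* Multiplicative (A ⧸ Asub A) :=
  MonoidHom.mk' (fun g => Multiplicative.ofAdd (QuotientAddGroup.mk (mat g 0 0 * mat g 0 1)))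
    (fun g h => by
      apply Multiplicative.toAdd.injective
      show (QuotientAddGroup.mk (mat (g*h) 0 0 * mat (g*h) 0 1) : A ⧸ Asub A)
        = QuotientAddGroup.mk (mat g 0 0 * mat g 0 1) + QuotientAddGroup.mk (mat h 0 0 * mat h 0 1)
      rw [← QuotientAddGroup.mk_add, QuotientAddGroup.eq_iff_sub_mem]
      have key : mat (g*h) 0 0 * mat (g*h) 0 1
          - (mat g 0 0 * mat g 0 1 + mat h 0 0 * mat h 0 1)
          = (mat h 0 0 * mat h 0 1) * ((mat g 0 0) ^ 2 - 1) := by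
        rw [mul_00, mul_01]
        have hg := det_eq g
        have hh := det_eq h
        show mat g 0 0 * mat h 0 0 * (mat g 0 0 * mat h 0 1 + mat g 0 1 * mat h 1 1)
          - _ = _
        linear_combination (mat g 0 0 * mat g 0 1) * hh
      rw [key]
      exact AddSubgroup.subset_closure ⟨mat h 0 0 * mat h 0 1, au g, rfl⟩)

def f : ↥(BA A) →* Aˣ × Multiplicative (A ⧸ Asub A) := MonoidHom.prod f1 f2

/-- unipotent element -/
def U (b : A) : ↥(BA A) :=
  ⟨⟨!![1, b; 0, 1], by simp [Matrix.det_fin_two_of]⟩, by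
    show (!![1, b; 0, 1] : Matrix (Fin 2) (Fin 2) A) 1 0 = 0
    simp⟩

def D (a : Aˣ) : ↥(BA A) :=
  ⟨⟨!![(a : A), 0; 0, ((a⁻¹ : Aˣ) : A)], by simp [Matrix.det_fin_two_of]⟩, by
    show (!![(a : A), 0; 0, ((a⁻¹ : Aˣ) : A)] : Matrix (Fin 2) (Fin 2) A) 1 0 = 0
    simp⟩

lemma U_mul (x y : A) : U x * U y = U (x + y) := by
  apply Subtype.ext; apply Subtype.ext
  show (!![1, x; 0, 1] : Matrix (Fin 2) (Fin 2) A) * !![1, y; 0, 1] = !![1, x + y; 0, 1]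
  ext i j
  fin_cases i <;> fin_cases j <;>
    simp [Matrix.mul_apply, Fin.sum_univ_two, add_comm]

lemma U_zero : U (0 : A) = 1 := by
  apply Subtype.ext; apply Subtype.ext
  show (!![1, (0:A); 0, 1] : Matrix (Fin 2) (Fin 2) A) = 1
  ext i j
  fin_cases i <;> fin_cases j <;> simp [Matrix.one_apply]

lemma U_inv (x : A) : (U x)⁻¹ = U (-x) := by
  rw [eq_comm, eq_inv_iff_mul_eq_one, U_mul]
  simp [U_zero]

lemma DU (a : Aˣ) (x : A) : D a * U x = U ((a : A) ^ 2 * x) * D a := by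
  apply Subtype.ext; apply Subtype.ext
  show (!![(a : A), 0; 0, ((a⁻¹ : Aˣ) : A)] : Matrix (Fin 2) (Fin 2) A) * !![1, x; 0, 1]
    = !![1, (a:A)^2*x; 0, 1] * !![(a : A), 0; 0, ((a⁻¹ : Aˣ) : A)]
  ext i j
  fin_cases i <;> fin_cases j <;>
    simp [Matrix.mul_apply, Fin.sum_univ_two] <;>
    linear_combination (-((a : A) * x)) * a.mul_inv

open scoped commutatorElement in
lemma commutator_DU (a : Aˣ) (x : A) : ⁅D a, U x⁆ = U (x * ((a : A) ^ 2 - 1)) := by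
  rw [commutatorElement_def, DU, mul_assoc (U _), mul_inv_cancel, mul_one, U_inv, U_mul]
  ring_nf

lemma U_mem_commutator {b : A} (hb : b ∈ Asub A) : U b ∈ commutator ↥(BA A) := by
  let S : AddSubgroup A :=
    { carrier := {b | U b ∈ commutator ↥(BA A)}
      zero_mem' := by simp only [Set.mem_setOf_eq, U_zero]; exact one_mem _
      add_mem' := by
        intro x y hx hy
        simp only [Set.mem_setOf_eq] at *
        rw [← U_mul]; exact mul_mem hx hy
      neg_mem' := by
        intro x hx
        simp only [Set.mem_setOf_eq] at *
        rw [← U_inv]; exact inv_mem hx }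
  have : Asub A ≤ S := by
    rw [Asub, AddSubgroup.closure_le]
    rintro z ⟨x, a, rfl⟩
    show U (x * ((a : A) ^ 2 - 1)) ∈ commutator ↥(BA A)
    rw [← commutator_DU]
    exact Subgroup.commutator_mem_commutator (Subgroup.mem_top _) (Subgroup.mem_top _)
  exact this hb

lemma mat_eq (g : ↥(BA A)) : mat g = !![mat g 0 0, mat g 0 1; 0, mat g 1 1] := by
  rw [← lower g]
  exact Matrix.etaExpand_eq (mat g) |>.symm

lemma ker_f : (f : ↥(BA A) →* _).ker = commutator ↥(BA A) := by
  apply le_antisymm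
  · intro g hg
    rw [MonoidHom.mem_ker, Prod.ext_iff] at hg
    obtain ⟨h1, h2⟩ := hg
    have ha : mat g 0 0 = 1 := congrArg Units.val h1
    have hd : mat g 1 1 = 1 := by
      have := det_eq g; rw [ha, one_mul] at this; exact this
    have hb : mat g 0 1 ∈ Asub A := by
      have : (QuotientAddGroup.mk (mat g 0 0 * mat g 0 1) : A ⧸ Asub A) = 0 := h2
      rw [ha, one_mul] at this
      rwa [← QuotientAddGroup.eq_zero_iff]
    have : g = U (mat g 0 1) := by
      apply Subtype.ext; apply Subtype.ext
      show mat g = !![1, mat g 0 1; 0, 1]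
      have h := mat_eq g
      rw [ha, hd] at h
      exact h
    rw [this]
    exact U_mem_commutator hb
  · rw [commutator_def, Subgroup.commutator_le]
    intro g _ h _
    rw [MonoidHom.mem_ker, map_commutatorElement]
    exact commutatorElement_eq_one_iff_mul_comm.2 (mul_comm _ _)

lemma f_surj : Function.Surjective (f : ↥(BA A) →* _) := by
  rintro ⟨u, q⟩
  obtain ⟨x, hx⟩ := QuotientAddGroup.mk_surjective (Multiplicative.toAdd q)
  refine ⟨⟨⟨!![(u : A), ((u⁻¹ : Aˣ) : A) * x; 0, ((u⁻¹ : Aˣ) : A)], ?_⟩, ?_⟩, ?_⟩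
  · simp [Matrix.det_fin_two_of]
  · show (!![(u : A), ((u⁻¹ : Aˣ) : A) * x; 0, ((u⁻¹ : Aˣ) : A)] :
      Matrix (Fin 2) (Fin 2) A) 1 0 = 0
    simp
  · have e00 : (!![(u : A), ((u⁻¹ : Aˣ) : A) * x; 0, ((u⁻¹ : Aˣ) : A)] :
      Matrix (Fin 2) (Fin 2) A) 0 0 = (u : A) := by simp
    have e01 : (!![(u : A), ((u⁻¹ : Aˣ) : A) * x; 0, ((u⁻¹ : Aˣ) : A)] :
      Matrix (Fin 2) (Fin 2) A) 0 1 = ((u⁻¹ : Aˣ) : A) * x := by simp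
    apply Prod.ext
    · apply Units.ext
      show (!![(u : A), ((u⁻¹ : Aˣ) : A) * x; 0, ((u⁻¹ : Aˣ) : A)] :
        Matrix (Fin 2) (Fin 2) A) 0 0 = (u : A)
      exact e00
    · apply Multiplicative.toAdd.injective
      show (QuotientAddGroup.mk
        ((!![(u : A), ((u⁻¹ : Aˣ) : A) * x; 0, ((u⁻¹ : Aˣ) : A)] :
          Matrix (Fin 2) (Fin 2) A) 0 0 *
         (!![(u : A), ((u⁻¹ : Aˣ) : A) * x; 0, ((u⁻¹ : Aˣ) : A)] :
          Matrix (Fin 2) (Fin 2) A) 0 1) : A ⧸ Asub A) = Multiplicative.toAdd q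
      rw [e00, e01, ← mul_assoc, Units.mul_inv, one_mul]
      exact hx

end BAab

/-- The map `B(A) → A^× × A_{A^×}`, `[[a,b],[0,a⁻¹]] ↦ (a, ab)`, is a
surjective group homomorphism with kernel the commutator subgroup of `B(A)`; hence
`B(A)ᵃᵇ ≅ A^× ⊕ A_{A^×}`. -/
theorem BA_abelianization
    (A : Type*) [CommRing A] :
    ∃ f : ↥(BA A) →* Aˣ × Multiplicative (A ⧸ Asub A),
      (∀ g : ↥(BA A),
        (((f g).1 : A) = ((g : Matrix.SpecialLinearGroup (Fin 2) A) :
            Matrix (Fin 2) (Fin 2) A) 0 0) ∧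
        (f g).2 = Multiplicative.ofAdd (QuotientAddGroup.mk
          (((g : Matrix.SpecialLinearGroup (Fin 2) A) : Matrix (Fin 2) (Fin 2) A) 0 0 *
           ((g : Matrix.SpecialLinearGroup (Fin 2) A) : Matrix (Fin 2) (Fin 2) A) 0 1))) ∧
      Function.Surjective f ∧
      f.ker = commutator ↥(BA A) ∧
      Nonempty (Abelianization ↥(BA A) ≃* Aˣ × Multiplicative (A ⧸ Asub A)) := by
  refine ⟨BAab.f, fun g => ⟨rfl, rfl⟩, BAab.f_surj, BAab.ker_f, ?_⟩
  exact ⟨(QuotientGroup.quotientMulEquivOfEq BAab.ker_f.symm).trans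
    (QuotientGroup.quotientKerEquivOfSurjective _ BAab.f_surj)⟩
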